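/- Let Ω ⊂ ℝ³ be a bounded convex domain with C¹ boundary and let d_x = d(x,∂Ω). Suppose g : Ω → ℝ satisfies |g(z)| ≤ C₀(1 + d_z^{-1})^{1/3+ε'} for all z ∈ Ω, with 0 < ε' and 1/3 + ε' < 1. Then for any x ∈ Ω, ζ ≠ 0, setting l = |x - p(x,ζ)|, we have ∫₀^{τ₋(x,ζ)} e^{-ν(|ζ|)s} g(x - sζ) ds ≤ C(1 + d_x^{-1})^{4/3+ε'}, where ν(|ζ|) ≥ ν₀(1+|ζ|)^γ with ν₀ > 0, 0 ≤ γ ≤ 1, and C depends only on C₀, ν₀, γ, ε', and diam(Ω). -/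

import Mathlib

open Set Set.Notation MeasureTheory intervalIntegral

lemma one_add_rpow_le {u p : ℝ} (hu : 0 ≤ u) (hp : 0 ≤ p) (hp1 : p ≤ 1) :
    (1 + u) ^ p ≤ 1 + u ^ p := by
  have h := NNReal.rpow_add_le_add_rpow (1 : NNReal) u.toNNReal hp hp1
  have h2 : ((((1 : NNReal) + u.toNNReal) ^ p : NNReal) : ℝ) ≤
      (((1 : NNReal) ^ p + u.toNNReal ^ p : NNReal) : ℝ) := by exact_mod_cast h
  rw [NNReal.coe_rpow, NNReal.coe_add, NNReal.coe_add, NNReal.coe_rpow, NNReal.coe_rpow] at h2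
  simpa [Real.coe_toNNReal u hu] using h2

lemma ball_infDist_frontier_subset {E : Type*} [NormedAddCommGroup E] [NormedSpace ℝ E]
    {Ω : Set E} (hopen : IsOpen Ω) {x : E} (hx : x ∈ Ω) :
    Metric.ball x (Metric.infDist x (frontier Ω)) ⊆ Ω := by
  set r := Metric.infDist x (frontier Ω) with hr
  rcases le_or_gt r 0 with h | h
  · rw [Metric.ball_eq_empty.2 h]; exact empty_subset _
  · have hdisj : Disjoint (frontier Ω) (Metric.ball x r) :=
      (Metric.disjoint_ball_infDist (s := frontier Ω)).symm
    have hclopen := isClopen_preimage_val hopen hdisj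
    haveI : PreconnectedSpace (Metric.ball x r) :=
      Subtype.preconnectedSpace (convex_ball x r).isPreconnected
    have huniv := hclopen.eq_univ (s := Metric.ball x r ↓∩ Ω)
      ⟨⟨x, Metric.mem_ball_self h⟩, hx⟩
    intro y hy
    have : (⟨y, hy⟩ : Metric.ball x r) ∈ Metric.ball x r ↓∩ Ω := by
      rw [huniv]; trivial
    exact this

set_option maxHeartbeats 1000000 in
theorem exit_ray_weighted_integral_bound
    (Ω : Set (EuclideanSpace ℝ (Fin 3)))
    (hopen : IsOpen Ω) (hbdd : Bornology.IsBounded Ω) (hconv : Convex ℝ Ω)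
    (C₀ ν₀ γ ε' : ℝ) (hC₀ : 0 < C₀) (hν₀ : 0 < ν₀)
    (hγ0 : 0 ≤ γ) (hγ1 : γ ≤ 1) (hε' : 0 < ε') (hε'1 : 1 / 3 + ε' < 1) :
    ∃ C > 0, ∀ (g : EuclideanSpace ℝ (Fin 3) → ℝ) (ν : ℝ → ℝ),
      (∀ ρ : ℝ, 0 ≤ ρ → ν₀ * (1 + ρ) ^ γ ≤ ν ρ) →
      (∀ z ∈ Ω, |g z| ≤
        C₀ * (1 + (Metric.infDist z (frontier Ω))⁻¹) ^ ((1 : ℝ) / 3 + ε')) →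
      ∀ x ∈ Ω, ∀ ζ : EuclideanSpace ℝ (Fin 3), ζ ≠ 0 →
      ∀ τ : ℝ, τ = sInf {t : ℝ | 0 < t ∧ x - t • ζ ∉ Ω} →
      (∫ s in (0 : ℝ)..τ, Real.exp (-(ν ‖ζ‖) * s) * g (x - s • ζ)) ≤
        C * (1 + (Metric.infDist x (frontier Ω))⁻¹) ^ ((4 : ℝ) / 3 + ε') := by
  set a : ℝ := 1 / 3 + ε' with ha_def
  have ha0 : 0 < a := by rw [ha_def]; linarith
  have ha1 : a < 1 := hε'1
  have h1a : (0:ℝ) < 1 - a := by linarith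
  have hCpos : 0 < C₀ * (3 + 2 / (1 - a)) / ν₀ := by
    have h2 : (0:ℝ) < 2 / (1 - a) := div_pos two_pos h1a
    exact div_pos (mul_pos hC₀ (by linarith)) hν₀
  refine ⟨C₀ * (3 + 2 / (1 - a)) / ν₀, hCpos, ?_⟩
  intro g ν hν hg x hx ζ hζ τ hτ
  set F := frontier Ω with hF
  set d := Metric.infDist x F with hd_def
  have hd_nonneg : 0 ≤ d := Metric.infDist_nonneg
  have hP1 : (1:ℝ) ≤ 1 + d⁻¹ := by
    have : 0 ≤ d⁻¹ := inv_nonneg.2 hd_nonneg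
    linarith
  have hRHSpos : 0 < (1 + d⁻¹) ^ ((4:ℝ)/3 + ε') := Real.rpow_pos_of_pos (by linarith) _
  have hν₀ne : ν₀ ≠ 0 := ne_of_gt hν₀
  set S := {t : ℝ | 0 < t ∧ x - t • ζ ∉ Ω} with hS_def
  have hζ0 : 0 < ‖ζ‖ := norm_pos_iff.mpr hζ
  -- S nonempty
  obtain ⟨R, hRsub⟩ := hbdd.subset_closedBall 0
  have hSne : S.Nonempty := by
    refine ⟨(R + ‖x‖ + 1) / ‖ζ‖, ?_, ?_⟩
    · have : 0 < R + ‖x‖ + 1 := by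
        have hR0 : 0 ≤ R :=
          le_trans (norm_nonneg x) (by simpa [Metric.mem_closedBall] using hRsub hx)
        positivity
      exact div_pos this hζ0
    · intro hmem
      have h1 : ‖x - ((R + ‖x‖ + 1) / ‖ζ‖) • ζ‖ ≤ R := by
        simpa [Metric.mem_closedBall, dist_eq_norm] using hRsub hmem
      have h2 : ‖((R + ‖x‖ + 1) / ‖ζ‖) • ζ‖ - ‖x‖ ≤ ‖x - ((R + ‖x‖ + 1) / ‖ζ‖) • ζ‖ := by
        have := norm_sub_norm_le (((R + ‖x‖ + 1) / ‖ζ‖) • ζ) x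
        rw [norm_sub_rev] at this
        linarith [this]
      have hR0 : 0 ≤ R :=
        le_trans (norm_nonneg x) (by simpa [Metric.mem_closedBall] using hRsub hx)
      have h3 : ‖((R + ‖x‖ + 1) / ‖ζ‖) • ζ‖ = R + ‖x‖ + 1 := by
        rw [norm_smul, Real.norm_eq_abs, abs_of_pos (div_pos (by positivity) hζ0)]
        field_simp
      rw [h3] at h2
      linarith
  have hSbdd : BddBelow S := ⟨0, fun t ht => ht.1.le⟩
  -- τ positive
  obtain ⟨r, hr0, hrball⟩ := Metric.isOpen_iff.mp hopen x hx
  have hτ_lb : r / ‖ζ‖ ≤ τ := by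
    rw [hτ]
    refine le_csInf hSne fun t ht => ?_
    by_contra hlt
    push_neg at hlt
    have : x - t • ζ ∈ Metric.ball x r := by
      rw [Metric.mem_ball, dist_eq_norm]
      have heq : ‖x - t • ζ - x‖ = t * ‖ζ‖ := by
        rw [show x - t • ζ - x = -(t • ζ) by abel, norm_neg, norm_smul, Real.norm_eq_abs,
          abs_of_pos ht.1]
      rw [heq]
      calc t * ‖ζ‖ < (r / ‖ζ‖) * ‖ζ‖ := by exact mul_lt_mul_of_pos_right hlt hζ0
        _ = r := by field_simp
    exact ht.2 (hrball this)
  have hτpos : 0 < τ := lt_of_lt_of_le (div_pos hr0 hζ0) hτ_lb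
  -- interior membership along the ray
  have hmem : ∀ s : ℝ, 0 ≤ s → s < τ → x - s • ζ ∈ Ω := by
    intro s hs0 hsτ
    rcases eq_or_lt_of_le hs0 with h | h
    · simpa [← h] using hx
    · by_contra hout
      have : s ∈ S := ⟨h, hout⟩
      have := csInf_le hSbdd this
      rw [← hτ] at this
      linarith
  -- the exit point q is in the frontier
  set q : EuclideanSpace ℝ (Fin 3) := x - τ • ζ with hq_def
  have hq_clΩ : q ∈ closure Ω := by
    rw [Metric.mem_closure_iff]
    intro ε hε
    set δ : ℝ := min τ (ε / ‖ζ‖) with hδ_def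
    have hδ0 : 0 < δ := lt_min hτpos (div_pos hε hζ0)
    refine ⟨x - (τ - δ / 2) • ζ, hmem _ (by have := min_le_left τ (ε / ‖ζ‖); linarith) (by linarith), ?_⟩
    rw [dist_eq_norm]
    have heq : q - (x - (τ - δ / 2) • ζ) = -((δ / 2) • ζ) := by
      rw [hq_def]
      rw [show τ • ζ = (τ - δ/2) • ζ + (δ/2) • ζ by rw [← add_smul]; ring_nf]
      abel
    rw [heq, norm_neg, norm_smul, Real.norm_eq_abs, abs_of_pos (by linarith)]
    have hδε : δ ≤ ε / ‖ζ‖ := min_le_right _ _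
    calc δ / 2 * ‖ζ‖ ≤ (ε / ‖ζ‖) / 2 * ‖ζ‖ := by nlinarith
      _ = ε / 2 := by field_simp
      _ < ε := by linarith
  have hq_clC : q ∈ closure Ωᶜ := by
    rw [Metric.mem_closure_iff]
    intro ε hε
    obtain ⟨t, htS, htlt⟩ : ∃ t ∈ S, t < τ + ε / ‖ζ‖ := by
      by_contra hcon
      push_neg at hcon
      have : τ + ε / ‖ζ‖ ≤ τ := by
        rw [hτ] at *
        exact le_csInf hSne hcon
      nlinarith [div_pos hε hζ0]
    have htge : τ ≤ t := by rw [hτ]; exact csInf_le hSbdd htS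
    refine ⟨x - t • ζ, htS.2, ?_⟩
    rw [dist_eq_norm]
    have heq : q - (x - t • ζ) = (t - τ) • ζ := by
      rw [hq_def]; rw [show (t - τ) • ζ = t • ζ - τ • ζ by rw [sub_smul]]; abel
    rw [heq, norm_smul, Real.norm_eq_abs, abs_of_nonneg (by linarith)]
    calc (t - τ) * ‖ζ‖ < (ε / ‖ζ‖) * ‖ζ‖ := by nlinarith
      _ = ε := by field_simp
  have hqF : q ∈ F := by
    rw [hF, frontier_eq_closure_inter_closure]
    exact ⟨hq_clΩ, hq_clC⟩
  have hFne : F.Nonempty := ⟨q, hqF⟩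
  have hFclosed : IsClosed F := isClosed_frontier
  have hxF : x ∉ F := by
    rw [hF, hopen.frontier_eq]
    exact fun h => h.2 hx
  have hd0 : 0 < d := by
    rw [hd_def]
    exact (hFclosed.notMem_iff_infDist_pos hFne).mp hxF
  have hball : Metric.ball x d ⊆ Ω := ball_infDist_frontier_subset hopen hx
  -- key geometric estimate
  have hkey : ∀ s : ℝ, 0 ≤ s → s < τ →
      (1 - s / τ) * d ≤ Metric.infDist (x - s • ζ) F := by
    intro s hs0 hsτ
    set t : ℝ := s / τ with ht_def
    have ht0 : 0 ≤ t := div_nonneg hs0 hτpos.le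
    have ht1 : t < 1 := (div_lt_one hτpos).2 hsτ
    have h1t : (0:ℝ) < 1 - t := by linarith
    by_contra hcon
    push_neg at hcon
    obtain ⟨w, hwF, hw⟩ := (Metric.infDist_lt_iff hFne).mp hcon
    have hwΩ : w ∈ Ω := by
      set z : EuclideanSpace ℝ (Fin 3) := x - s • ζ with hz_def
      set v : EuclideanSpace ℝ (Fin 3) := w - z with hv_def
      have hvnorm : ‖v‖ < (1 - t) * d := by
        rw [hv_def, ← dist_eq_norm, dist_comm]
        exact hw
      have hy : x + (1 - t)⁻¹ • v ∈ Ω := by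
        apply hball
        rw [Metric.mem_ball, dist_eq_norm]
        rw [show x + (1 - t)⁻¹ • v - x = (1 - t)⁻¹ • v by abel]
        rw [norm_smul, Real.norm_eq_abs, abs_of_pos (inv_pos.2 h1t)]
        rw [inv_mul_lt_iff₀ h1t]
        linarith [hvnorm]
      have hcombo : (1 - t) • (x + (1 - t)⁻¹ • v) + t • q = w := by
        rw [smul_add, smul_inv_smul₀ (ne_of_gt h1t)]
        rw [hv_def, hz_def, hq_def]
        have hst : s = t * τ := by rw [ht_def]; field_simp
        rw [hst]
        module
      have := hconv.combo_interior_closure_mem_interior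
        (by rw [hopen.interior_eq]; exact hy) hq_clΩ h1t ht0 (by ring)
      rw [hopen.interior_eq] at this
      rw [hcombo] at this
      exact this
    rw [hF, hopen.frontier_eq] at hwF
    exact hwF.2 hwΩ
  -- exponential comparison
  have hν₀le : ∀ s : ℝ, 0 ≤ s → Real.exp (-(ν ‖ζ‖) * s) ≤ Real.exp (-ν₀ * s) := by
    intro s hs
    apply Real.exp_le_exp.2
    have h1 : ν₀ ≤ ν ‖ζ‖ := by
      have h2 := hν ‖ζ‖ (norm_nonneg ζ)
      have h3 : (1:ℝ) ≤ (1 + ‖ζ‖) ^ γ := Real.one_le_rpow (by linarith [norm_nonneg ζ]) hγ0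
      nlinarith
    nlinarith
  set K₁ : ℝ := C₀ * (1 + (2 / d) ^ a) with hK₁
  set K₂ : ℝ := C₀ * ((τ / d) ^ a * Real.exp (-(ν₀ * (τ / 2)))) with hK₂
  have h2d : 0 ≤ (2 / d) ^ a := Real.rpow_nonneg (by positivity) a
  have hτd : 0 ≤ (τ / d) ^ a := Real.rpow_nonneg (by positivity) a
  have hK₁0 : 0 ≤ K₁ := by rw [hK₁]; nlinarith
  have hK₂0 : 0 ≤ K₂ := by
    rw [hK₂]; exact mul_nonneg hC₀.le (mul_nonneg hτd (Real.exp_pos _).le)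
  -- pointwise bound
  have hpoint : ∀ s : ℝ, 0 ≤ s → s < τ →
      Real.exp (-(ν ‖ζ‖) * s) * g (x - s • ζ) ≤
        K₁ * Real.exp (-ν₀ * s) + K₂ * (τ - s) ^ (-a) := by
    intro s hs0 hsτ
    have hτs : 0 < τ - s := by linarith
    have hzΩ : x - s • ζ ∈ Ω := hmem s hs0 hsτ
    have hst : 0 < 1 - s / τ := by
      have := (div_lt_one hτpos).2 hsτ; linarith
    have hiz := hkey s hs0 hsτ
    have hizpos : 0 < (1 - s / τ) * d := mul_pos hst hd0
    have hidpos : 0 < Metric.infDist (x - s • ζ) F := lt_of_lt_of_le hizpos hiz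
    set u : ℝ := τ / (d * (τ - s)) with hu_def
    have hu0 : 0 ≤ u := by positivity
    have hua0 : 0 ≤ u ^ a := Real.rpow_nonneg hu0 a
    have hinv : (Metric.infDist (x - s • ζ) F)⁻¹ ≤ u := by
      have h1 : (Metric.infDist (x - s • ζ) F)⁻¹ ≤ ((1 - s / τ) * d)⁻¹ :=
        inv_anti₀ hizpos hiz
      have hτne : τ ≠ 0 := ne_of_gt hτpos
      have h2 : ((1 - s / τ) * d)⁻¹ = u := by
        rw [hu_def, show (1 - s / τ) * d = d * (τ - s) / τ by field_simp, inv_div]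
      rw [h2] at h1; exact h1
    have hgz : g (x - s • ζ) ≤ C₀ * (1 + u ^ a) := by
      calc g (x - s • ζ) ≤ |g (x - s • ζ)| := le_abs_self _
        _ ≤ C₀ * (1 + (Metric.infDist (x - s • ζ) F)⁻¹) ^ a := hg _ hzΩ
        _ ≤ C₀ * (1 + u) ^ a := by
            apply mul_le_mul_of_nonneg_left _ hC₀.le
            apply Real.rpow_le_rpow (by positivity) (by linarith) ha0.le
        _ ≤ C₀ * (1 + u ^ a) :=
            mul_le_mul_of_nonneg_left (one_add_rpow_le hu0 ha0.le ha1.le) hC₀.le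
    have hE := hν₀le s hs0
    have huaa : u ^ a = (τ / d) ^ a * (τ - s) ^ (-a) := by
      rw [Real.rpow_neg hτs.le]
      rw [show u = (τ / d) * (τ - s)⁻¹ by rw [hu_def]; field_simp]
      rw [Real.mul_rpow (by positivity) (by positivity), Real.inv_rpow hτs.le]
    have main1 : Real.exp (-(ν ‖ζ‖) * s) * g (x - s • ζ) ≤
        C₀ * Real.exp (-ν₀ * s) + C₀ * Real.exp (-ν₀ * s) * u ^ a := by
      calc Real.exp (-(ν ‖ζ‖) * s) * g (x - s • ζ)
          ≤ Real.exp (-(ν ‖ζ‖) * s) * (C₀ * (1 + u ^ a)) :=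
            mul_le_mul_of_nonneg_left hgz (Real.exp_pos _).le
        _ ≤ Real.exp (-ν₀ * s) * (C₀ * (1 + u ^ a)) := by
            apply mul_le_mul_of_nonneg_right hE
            exact mul_nonneg hC₀.le (by linarith)
        _ = C₀ * Real.exp (-ν₀ * s) + C₀ * Real.exp (-ν₀ * s) * u ^ a := by ring
    rcases le_or_gt s (τ / 2) with hhalf | hhalf
    · have hub : u ≤ 2 / d := by
        rw [hu_def, div_le_div_iff₀ (by positivity) hd0]
        nlinarith
      have hub2 : u ^ a ≤ (2 / d) ^ a := Real.rpow_le_rpow hu0 hub ha0.le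
      have h2 : C₀ * Real.exp (-ν₀ * s) * u ^ a ≤
          C₀ * (2 / d) ^ a * Real.exp (-ν₀ * s) := by
        calc C₀ * Real.exp (-ν₀ * s) * u ^ a
            ≤ C₀ * Real.exp (-ν₀ * s) * (2 / d) ^ a :=
              mul_le_mul_of_nonneg_left hub2 (mul_nonneg hC₀.le (Real.exp_pos _).le)
          _ = C₀ * (2 / d) ^ a * Real.exp (-ν₀ * s) := by ring
      have h3 : 0 ≤ K₂ * (τ - s) ^ (-a) :=
        mul_nonneg hK₂0 (Real.rpow_nonneg hτs.le _)
      have hK1eq : K₁ * Real.exp (-ν₀ * s) =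
          C₀ * Real.exp (-ν₀ * s) + C₀ * (2 / d) ^ a * Real.exp (-ν₀ * s) := by
        rw [hK₁]; ring
      linarith
    · have hs2 : Real.exp (-ν₀ * s) ≤ Real.exp (-(ν₀ * (τ / 2))) :=
        Real.exp_le_exp.2 (by nlinarith)
      have hTnn : 0 ≤ (τ - s) ^ (-a) := Real.rpow_nonneg hτs.le _
      have h2 : C₀ * Real.exp (-ν₀ * s) * u ^ a ≤ K₂ * (τ - s) ^ (-a) := by
        rw [huaa, hK₂]
        calc C₀ * Real.exp (-ν₀ * s) * ((τ / d) ^ a * (τ - s) ^ (-a))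
            = C₀ * (τ / d) ^ a * (τ - s) ^ (-a) * Real.exp (-ν₀ * s) := by ring
          _ ≤ C₀ * (τ / d) ^ a * (τ - s) ^ (-a) * Real.exp (-(ν₀ * (τ / 2))) := by
              apply mul_le_mul_of_nonneg_left hs2
              exact mul_nonneg (mul_nonneg hC₀.le hτd) hTnn
          _ = C₀ * ((τ / d) ^ a * Real.exp (-(ν₀ * (τ / 2)))) * (τ - s) ^ (-a) := by ring
      have h1 : C₀ * Real.exp (-ν₀ * s) ≤ K₁ * Real.exp (-ν₀ * s) := by
        apply mul_le_mul_of_nonneg_right _ (Real.exp_pos _).le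
        rw [hK₁]; nlinarith
      linarith
  -- integrability of the bounding function
  have hInt_exp : IntervalIntegrable (fun s => Real.exp (-ν₀ * s)) volume 0 τ :=
    (Real.continuous_exp.comp (continuous_const.mul continuous_id)).intervalIntegrable 0 τ
  have hInt_rpow : IntervalIntegrable (fun s : ℝ => (τ - s) ^ (-a)) volume 0 τ := by
    have h1 : IntervalIntegrable (fun v : ℝ => v ^ (-a)) volume τ 0 :=
      intervalIntegrable_rpow' (by linarith)
    have h2 := h1.comp_sub_left τ
    simpa using h2
  have hInt_B : IntervalIntegrable
      (fun s => K₁ * Real.exp (-ν₀ * s) + K₂ * (τ - s) ^ (-a)) volume 0 τ :=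
    (hInt_exp.const_mul K₁).add (hInt_rpow.const_mul K₂)
  by_cases hfi : IntervalIntegrable
      (fun s => Real.exp (-(ν ‖ζ‖) * s) * g (x - s • ζ)) volume 0 τ
  · have hmono : (∫ s in (0:ℝ)..τ, Real.exp (-(ν ‖ζ‖) * s) * g (x - s • ζ)) ≤
        ∫ s in (0:ℝ)..τ, (K₁ * Real.exp (-ν₀ * s) + K₂ * (τ - s) ^ (-a)) := by
      apply intervalIntegral.integral_mono_ae_restrict hτpos.le hfi hInt_B
      have hne : ∀ᵐ s ∂(volume.restrict (Icc (0:ℝ) τ)), s ≠ τ := by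
        refine ae_restrict_of_ae ?_
        rw [ae_iff]
        have hset : {s : ℝ | ¬s ≠ τ} = {τ} := by ext y; simp
        rw [hset]
        exact measure_singleton τ
      have hmem' : ∀ᵐ s ∂(volume.restrict (Icc (0:ℝ) τ)), s ∈ Icc (0:ℝ) τ :=
        ae_restrict_mem measurableSet_Icc
      filter_upwards [hne, hmem'] with s hsne hsmem
      exact hpoint s hsmem.1 (lt_of_le_of_ne hsmem.2 hsne)
    have hsplit : (∫ s in (0:ℝ)..τ, (K₁ * Real.exp (-ν₀ * s) + K₂ * (τ - s) ^ (-a)))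
        = K₁ * (∫ s in (0:ℝ)..τ, Real.exp (-ν₀ * s)) +
          K₂ * (∫ s in (0:ℝ)..τ, (τ - s) ^ (-a)) := by
      rw [intervalIntegral.integral_add (hInt_exp.const_mul K₁) (hInt_rpow.const_mul K₂),
        intervalIntegral.integral_const_mul, intervalIntegral.integral_const_mul]
    have hE_int : (∫ s in (0:ℝ)..τ, Real.exp (-ν₀ * s)) ≤ 1 / ν₀ := by
      have hder : ∀ v ∈ Set.uIcc (0:ℝ) τ,
          HasDerivAt (fun w => -Real.exp (-ν₀ * w) / ν₀) (Real.exp (-ν₀ * v)) v := by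
        intro v _
        have h1 : HasDerivAt (fun w : ℝ => -ν₀ * w) (-ν₀) v := by
          simpa using (hasDerivAt_id v).const_mul (-ν₀)
        have h2 := h1.exp
        have h3 := (h2.div_const ν₀).neg
        have h4 : HasDerivAt (fun w => -Real.exp (-ν₀ * w) / ν₀)
            (-(Real.exp (-ν₀ * v) * -ν₀ / ν₀)) v := by
          have hfun : (fun w => -Real.exp (-ν₀ * w) / ν₀) = -fun x => Real.exp (-ν₀ * x) / ν₀ := by
            funext w; simp only [Pi.neg_apply, neg_div]
          rw [hfun]; exact h3
        exact h4.congr_deriv (by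
          rw [mul_neg, neg_div, neg_neg, mul_div_assoc, div_self hν₀ne, mul_one])
      have hcalc := intervalIntegral.integral_eq_sub_of_hasDerivAt hder hInt_exp
      rw [hcalc]
      have hexp0 : Real.exp (-ν₀ * 0) = 1 := by norm_num
      rw [hexp0]
      have hpos : 0 ≤ Real.exp (-ν₀ * τ) / ν₀ := div_nonneg (Real.exp_pos _).le hν₀.le
      rw [neg_div, neg_div]
      linarith
    have hJ_int : (∫ s in (0:ℝ)..τ, (τ - s) ^ (-a)) = τ ^ (1 - a) / (1 - a) := by
      rw [intervalIntegral.integral_comp_sub_left (fun v : ℝ => v ^ (-a)) τ]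
      simp only [sub_self, sub_zero]
      rw [integral_rpow (Or.inl (by linarith : (-1:ℝ) < -a))]
      rw [Real.zero_rpow (by linarith : -a + 1 ≠ 0)]
      rw [show -a + 1 = 1 - a by ring]
      ring
    have hEnn : 0 ≤ (∫ s in (0:ℝ)..τ, Real.exp (-ν₀ * s)) :=
      intervalIntegral.integral_nonneg hτpos.le (fun v _ => (Real.exp_pos _).le)
    -- bound K₂ * J
    have hτe : τ * Real.exp (-(ν₀ * (τ / 2))) ≤ 2 / ν₀ := by
      have h1 : ν₀ * (τ / 2) + 1 ≤ Real.exp (ν₀ * (τ / 2)) := Real.add_one_le_exp _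
      have hz := Real.exp_pos (ν₀ * (τ / 2))
      rw [Real.exp_neg, inv_eq_one_div, mul_one_div, div_le_div_iff₀ hz hν₀]
      nlinarith
    have hτaa : (τ / d) ^ a * τ ^ (1 - a) = τ * (d ^ a)⁻¹ := by
      rw [Real.div_rpow hτpos.le hd0.le, div_mul_eq_mul_div, ← Real.rpow_add hτpos,
        show a + (1 - a) = 1 by ring, Real.rpow_one, div_eq_mul_inv]
    have hKJ : K₂ * (τ ^ (1 - a) / (1 - a)) ≤ C₀ * (d ^ a)⁻¹ * (2 / ν₀) / (1 - a) := by
      rw [hK₂]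
      have hstep : C₀ * ((τ / d) ^ a * Real.exp (-(ν₀ * (τ / 2)))) * (τ ^ (1 - a) / (1 - a))
          = (C₀ / (1 - a) * (d ^ a)⁻¹) * (τ * Real.exp (-(ν₀ * (τ / 2)))) := by
        rw [show C₀ * ((τ / d) ^ a * Real.exp (-(ν₀ * (τ / 2)))) * (τ ^ (1 - a) / (1 - a))
            = C₀ / (1 - a) * ((τ / d) ^ a * τ ^ (1 - a)) * Real.exp (-(ν₀ * (τ / 2))) by ring,
          hτaa]
        ring
      rw [hstep]
      have hcoef : 0 ≤ C₀ / (1 - a) * (d ^ a)⁻¹ := by positivity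
      calc (C₀ / (1 - a) * (d ^ a)⁻¹) * (τ * Real.exp (-(ν₀ * (τ / 2))))
          ≤ (C₀ / (1 - a) * (d ^ a)⁻¹) * (2 / ν₀) := mul_le_mul_of_nonneg_left hτe hcoef
        _ = C₀ * (d ^ a)⁻¹ * (2 / ν₀) / (1 - a) := by ring
    -- final assembly
    have hP : (1:ℝ) ≤ (1 + d⁻¹) ^ (1 + a) := Real.one_le_rpow hP1 (by linarith)
    have hA : (d ^ a)⁻¹ ≤ (1 + d⁻¹) ^ (1 + a) := by
      have h1 : (d ^ a)⁻¹ = (d⁻¹) ^ a := (Real.inv_rpow hd0.le a).symm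
      have h2 : (d⁻¹) ^ a ≤ (1 + d⁻¹) ^ a :=
        Real.rpow_le_rpow (inv_nonneg.2 hd0.le) (by linarith) ha0.le
      have h3 : (1 + d⁻¹) ^ a ≤ (1 + d⁻¹) ^ (1 + a) :=
        Real.rpow_le_rpow_of_exponent_le hP1 (by linarith)
      rw [h1]; linarith
    have hB2 : (2 / d) ^ a ≤ 2 * (1 + d⁻¹) ^ (1 + a) := by
      have h1 : (2 / d) ^ a = 2 ^ a * (d⁻¹) ^ a := by
        rw [div_eq_mul_inv, Real.mul_rpow (by norm_num) (inv_nonneg.2 hd0.le)]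
      have h2 : (2:ℝ) ^ a ≤ 2 := by
        have := Real.rpow_le_rpow_of_exponent_le (one_le_two) ha1.le
        rwa [Real.rpow_one] at this
      have h3 : (d⁻¹) ^ a ≤ (1 + d⁻¹) ^ (1 + a) :=
        le_trans (Real.rpow_le_rpow (inv_nonneg.2 hd0.le) (by linarith) ha0.le)
          (Real.rpow_le_rpow_of_exponent_le hP1 (by linarith))
      have h4 : 0 ≤ (d⁻¹) ^ a := Real.rpow_nonneg (inv_nonneg.2 hd0.le) a
      calc (2 / d) ^ a = 2 ^ a * (d⁻¹) ^ a := h1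
        _ ≤ 2 * (d⁻¹) ^ a := mul_le_mul_of_nonneg_right h2 h4
        _ ≤ 2 * (1 + d⁻¹) ^ (1 + a) := by linarith
    rw [show (4:ℝ) / 3 + ε' = 1 + a by rw [ha_def]; ring]
    have hK1b : K₁ * (∫ s in (0:ℝ)..τ, Real.exp (-ν₀ * s)) ≤ K₁ * (1 / ν₀) :=
      mul_le_mul_of_nonneg_left hE_int hK₁0
    have htotal : (∫ s in (0:ℝ)..τ, Real.exp (-(ν ‖ζ‖) * s) * g (x - s • ζ)) ≤
        K₁ * (1 / ν₀) + C₀ * (d ^ a)⁻¹ * (2 / ν₀) / (1 - a) := by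
      rw [hsplit, hJ_int] at hmono
      linarith
    refine le_trans htotal ?_
    rw [hK₁]
    have m1 : C₀ / ν₀ * 1 ≤ C₀ / ν₀ * (1 + d⁻¹) ^ (1 + a) :=
      mul_le_mul_of_nonneg_left hP (div_pos hC₀ hν₀).le
    have m2 : C₀ / ν₀ * (2 / d) ^ a ≤ C₀ / ν₀ * (2 * (1 + d⁻¹) ^ (1 + a)) :=
      mul_le_mul_of_nonneg_left hB2 (div_pos hC₀ hν₀).le
    have m3 : 2 * C₀ / ν₀ / (1 - a) * (d ^ a)⁻¹ ≤
        2 * C₀ / ν₀ / (1 - a) * (1 + d⁻¹) ^ (1 + a) := by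
      apply mul_le_mul_of_nonneg_left hA
      positivity
    have heq1 : C₀ * (1 + (2 / d) ^ a) * (1 / ν₀) + C₀ * (d ^ a)⁻¹ * (2 / ν₀) / (1 - a)
        = C₀ / ν₀ * 1 + C₀ / ν₀ * (2 / d) ^ a +
          2 * C₀ / ν₀ / (1 - a) * (d ^ a)⁻¹ := by
      ring
    have heq2 : C₀ * (3 + 2 / (1 - a)) / ν₀ * (1 + d⁻¹) ^ (1 + a)
        = C₀ / ν₀ * (1 + d⁻¹) ^ (1 + a) + C₀ / ν₀ * (2 * (1 + d⁻¹) ^ (1 + a)) +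
          2 * C₀ / ν₀ / (1 - a) * (1 + d⁻¹) ^ (1 + a) := by
      ring
    rw [heq1, heq2]
    linarith
  · rw [intervalIntegral.integral_undef hfi]
    exact (mul_pos hCpos hRHSpos).le
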